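/- In the two-day equitable scheduling problem, any k-equitable pair of schedules can be transformed into a k-equitable pair in which the schedule of day two is the reverse of the schedule of day one. -/
import Mathlib


def C {n : ℕ} (σ : Equiv.Perm (Fin n)) (p : Fin n → ℕ) (j : Fin n) : ℕ :=
  ∑ j' ∈ Finset.univ.filter (fun j' => σ j' ≤ σ j), p j'

theorem stmt3 (n k : ℕ) (p1 p2 : Fin n → ℕ)
    (h : ∃ σ₁ σ₂ : Equiv.Perm (Fin n), ∀ j, C σ₁ p1 j + C σ₂ p2 j ≤ k) :
    ∃ σ₁ σ₂ : Equiv.Perm (Fin n), (∀ j, (σ₂ j : ℕ) = n - 1 - (σ₁ j : ℕ)) ∧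
      ∀ j, C σ₁ p1 j + C σ₂ p2 j ≤ k := by
  obtain ⟨σ₁, σ₂, hk⟩ := h
  refine ⟨σ₁, σ₁.trans Fin.revPerm, fun j => ?_, fun j => ?_⟩
  · simp [Fin.val_rev]; omega
  · -- pick j* in S = {j' : σ₁ j ≤ σ₁ j'} maximizing σ₂
    have hSne : j ∈ Finset.univ.filter (fun j' => σ₁ j ≤ σ₁ j') := by simp
    obtain ⟨js, hjs, hmax⟩ := Finset.exists_max_image
      (Finset.univ.filter (fun j' => σ₁ j ≤ σ₁ j')) σ₂ ⟨j, hSne⟩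
    simp only [Finset.mem_filter, Finset.mem_univ, true_and] at hjs
    have h1 : C σ₁ p1 j ≤ C σ₁ p1 js := by
      apply Finset.sum_le_sum_of_subset
      intro x hx
      simp only [Finset.mem_filter, Finset.mem_univ, true_and] at hx ⊢
      exact hx.trans hjs
    have h2 : C (σ₁.trans Fin.revPerm) p2 j ≤ C σ₂ p2 js := by
      apply Finset.sum_le_sum_of_subset
      intro x hx
      simp only [Finset.mem_filter, Finset.mem_univ, true_and, Equiv.trans_apply,
        Fin.revPerm_apply, Fin.rev_le_rev] at hx ⊢
      exact hmax x (by simp [hx])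
    calc C σ₁ p1 j + C (σ₁.trans Fin.revPerm) p2 j
        ≤ C σ₁ p1 js + C σ₂ p2 js := Nat.add_le_add h1 h2
      _ ≤ k := hk js
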